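/- In the fixed-design kernel regression setting, define early-stopping (gradient descent) iterates by ᾰ₀ = 0 and ᾰ_t = ᾰ_{t−1} − (γ/n)(K_n ᾰ_{t−1} − y), with prediction vectors v̆_t = K_n ᾰ_t. If 0 < γ < 1/‖K_n‖_op and t ≥ 2, then E[R(v̆_t)] ≤ c_t · E[R(v̄_{1/(γt)})], where v̄_λ = K_n(K_n + λn I_n)⁻¹ y is the KRLS prediction with λ = 1/(γt), and c_t = 4(1 + 1/(t−1))² ≤ 16. -/

import Mathlib

open MeasureTheory ProbabilityTheory Matrix

/-- In the fixed design setting, the expected risk of a deterministic prediction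
vector `u ∈ ℝⁿ` : `E(u) = 𝔼_ε (1/n)‖u - (μ + ε)‖²`. -/
noncomputable def detRisk {Ω : Type*} [MeasurableSpace Ω] (P : Measure Ω) {n : ℕ}
    (μ : Fin n → ℝ) (ε : Ω → Fin n → ℝ) (u : Fin n → ℝ) : ℝ :=
  ∫ ω, (1 / (n : ℝ)) * ∑ i, (u i - (μ i + ε ω i)) ^ 2 ∂P

/-- The infimum of the expected risk over prediction vectors in the range of the
kernel matrix `K_n` (the RKHS in the fixed design). -/
noncomputable def bayesRisk {Ω : Type*} [MeasurableSpace Ω] (P : Measure Ω) {n : ℕ}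
    (Kn : Matrix (Fin n) (Fin n) ℝ) (μ : Fin n → ℝ) (ε : Ω → Fin n → ℝ) : ℝ :=
  ⨅ a : Fin n → ℝ, detRisk P μ ε (Kn.mulVec a)

/-- The expected risk of a random (data-dependent) prediction vector `v : Ω → ℝⁿ`. -/
noncomputable def expRisk {Ω : Type*} [MeasurableSpace Ω] (P : Measure Ω) {n : ℕ}
    (μ : Fin n → ℝ) (ε : Ω → Fin n → ℝ) (v : Ω → Fin n → ℝ) : ℝ :=
  ∫ ω, detRisk P μ ε (v ω) ∂P

/-- The operator (spectral) norm of a real square matrix, i.e. the norm of the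
associated operator on Euclidean space. -/
noncomputable def opNorm {n : ℕ} (A : Matrix (Fin n) (Fin n) ℝ) : ℝ :=
  ‖Matrix.toEuclideanCLM (𝕜 := ℝ) A‖

section auxlemmas

private lemma aux_bern_lower (x : ℝ) (hx : x ≤ 1) (t : ℕ) : 1 - t * x ≤ (1 - x) ^ t := by
  have h := one_add_mul_le_pow (a := -x) (by linarith) t
  have h2 : (1 + -x) = 1 - x := by ring
  rw [h2] at h
  linarith

private lemma aux_pow_mul_le (x : ℝ) (t : ℕ) (hx0 : 0 ≤ x) (hx1 : x ≤ 1) :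
    (1 - x) ^ t * (1 + t * x) ≤ 1 := by
  have h1 : (0:ℝ) ≤ 1 - x := by linarith
  have h2 : 1 + (t:ℝ) * x ≤ (1 + x) ^ t := by
    have := one_add_mul_le_pow (a := x) (by linarith) t
    linarith
  have h3 : (1 - x) ^ t * (1 + x) ^ t ≤ 1 := by
    rw [← mul_pow]
    have hx2 : 0 ≤ x * x := mul_nonneg hx0 hx0
    exact pow_le_one₀ (by nlinarith) (by nlinarith)
  calc (1 - x) ^ t * (1 + t * x) ≤ (1 - x) ^ t * (1 + x) ^ t :=
        mul_le_mul_of_nonneg_left h2 (pow_nonneg h1 t)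
    _ ≤ 1 := h3

private lemma scalar_key (x σ2 m2 : ℝ) (t : ℕ) (hx0 : 0 ≤ x) (hx1 : x ≤ 1)
    (hσ : 0 ≤ σ2) (hm : 0 ≤ m2) :
    ((1 - x) ^ t) ^ 2 * m2 - (1 / (1 + t * x)) ^ 2 * m2 + σ2 * (1 - (1 - x) ^ t) ^ 2
      ≤ 4 * σ2 * (t * x / (1 + t * x)) ^ 2 := by
  set q : ℝ := t * x with hq
  have hq0 : 0 ≤ q := mul_nonneg (Nat.cast_nonneg t) hx0
  have hD : (0:ℝ) < 1 + q := by linarith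
  set p : ℝ := (1 - x) ^ t with hp
  have hp0 : 0 ≤ p := pow_nonneg (by linarith) t
  have hp1 : p ≤ 1 := pow_le_one₀ (by linarith) (by linarith)
  have hpD : p * (1 + q) ≤ 1 := by
    have := aux_pow_mul_le x t hx0 hx1
    rw [← hp, ← hq] at this
    linarith [this]
  have hA : p ≤ 1 / (1 + q) := (le_div_iff₀ hD).mpr hpD
  have hA2 : p ^ 2 ≤ (1 / (1 + q)) ^ 2 := pow_le_pow_left₀ hp0 hA 2
  have hbern : 1 - q ≤ p := aux_bern_lower x hx1 t
  have hB' : (1 - p) * (1 + q) ≤ 2 * q := by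
    rcases le_total q 1 with h | h
    · nlinarith [mul_nonneg hq0 (by linarith : (0:ℝ) ≤ 1 - q)]
    · nlinarith
  have hB : 1 - p ≤ 2 * (q / (1 + q)) := by
    rw [mul_div_assoc']
    exact (le_div_iff₀ hD).mpr hB'
  have hB2 : (1 - p) ^ 2 ≤ (2 * (q / (1 + q))) ^ 2 := pow_le_pow_left₀ (by linarith) hB 2
  nlinarith [mul_le_mul_of_nonneg_left hB2 hσ, mul_le_mul_of_nonneg_right hA2 hm]

variable {n : ℕ} {U : Matrix (Fin n) (Fin n) ℝ}

private lemma myconj_mul (hU1 : Uᵀ * U = 1) (a b : Fin n → ℝ) :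
    (U * diagonal a * Uᵀ) * (U * diagonal b * Uᵀ)
      = U * diagonal (fun i => a i * b i) * Uᵀ := by
  have h : (U * diagonal a * Uᵀ) * (U * diagonal b * Uᵀ)
      = U * diagonal a * (Uᵀ * U) * (diagonal b * Uᵀ) := by noncomm_ring
  rw [h, hU1, mul_one, ← diagonal_mul_diagonal]
  noncomm_ring

private lemma myconj_one (hU2 : U * Uᵀ = 1) :
    U * diagonal (fun _ : Fin n => (1:ℝ)) * Uᵀ = 1 := by
  rw [diagonal_one, mul_one, hU2]

private lemma myconj_pow (hU1 : Uᵀ * U = 1) (hU2 : U * Uᵀ = 1) (a : Fin n → ℝ) (k : ℕ) :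
    (U * diagonal a * Uᵀ) ^ k = U * diagonal (fun i => a i ^ k) * Uᵀ := by
  induction k with
  | zero => simp only [pow_zero]; exact (myconj_one hU2).symm
  | succ k ih => rw [pow_succ, ih, myconj_mul hU1]; congr 2

private lemma myconj_sub (a b : Fin n → ℝ) :
    (U * diagonal a * Uᵀ) - (U * diagonal b * Uᵀ)
      = U * diagonal (fun i => a i - b i) * Uᵀ := by
  rw [← diagonal_sub]
  noncomm_ring

private lemma myconj_add (a b : Fin n → ℝ) :
    (U * diagonal a * Uᵀ) + (U * diagonal b * Uᵀ)
      = U * diagonal (fun i => a i + b i) * Uᵀ := by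
  rw [← diagonal_add]
  noncomm_ring

private lemma myconj_smul (c : ℝ) (a : Fin n → ℝ) :
    c • (U * diagonal a * Uᵀ) = U * diagonal (fun i => c * a i) * Uᵀ := by
  rw [show (fun i => c * a i) = c • a from rfl, diagonal_smul, Matrix.mul_smul, Matrix.smul_mul]

private lemma myconj_inv (hU1 : Uᵀ * U = 1) (hU2 : U * Uᵀ = 1) (a : Fin n → ℝ)
    (h : ∀ i, a i ≠ 0) :
    (U * diagonal a * Uᵀ)⁻¹ = U * diagonal (fun i => (a i)⁻¹) * Uᵀ := by
  apply inv_eq_right_inv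
  rw [myconj_mul hU1]
  rw [show (fun i => a i * (a i)⁻¹) = fun _ : Fin n => (1:ℝ) from
    funext fun i => mul_inv_cancel₀ (h i)]
  exact myconj_one hU2

private lemma sumsq_mulVec (hU1 : Uᵀ * U = 1) (w : Fin n → ℝ) :
    ∑ i, (U.mulVec w i) ^ 2 = ∑ i, w i ^ 2 := by
  have hdp : ∀ v : Fin n → ℝ, ∑ i, v i ^ 2 = v ⬝ᵥ v := by
    intro v; simp [dotProduct, sq]
  rw [hdp, hdp, dotProduct_mulVec, ← mulVec_transpose, mulVec_mulVec, hU1, one_mulVec]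

private lemma sumsq_conj (hU1 : Uᵀ * U = 1) (a v : Fin n → ℝ) :
    ∑ i, ((U * diagonal a * Uᵀ).mulVec v i) ^ 2
      = ∑ i, (a i) ^ 2 * ((Uᵀ.mulVec v) i) ^ 2 := by
  have h1 : (U * diagonal a * Uᵀ).mulVec v
      = U.mulVec ((diagonal a).mulVec (Uᵀ.mulVec v)) := by
    rw [mulVec_mulVec, mulVec_mulVec]
  rw [h1, sumsq_mulVec hU1]
  apply Finset.sum_congr rfl
  intro i _
  rw [mulVec_diagonal]
  ring

private lemma bias_conj (hU1 : Uᵀ * U = 1) (hU2 : U * Uᵀ = 1) (f v : Fin n → ℝ) :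
    ∑ i, ((U * diagonal f * Uᵀ).mulVec v i - v i) ^ 2
      = ∑ i, (f i - 1) ^ 2 * ((Uᵀ.mulVec v) i) ^ 2 := by
  have h1 : (U * diagonal (fun j => f j - 1) * Uᵀ).mulVec v
      = fun i => (U * diagonal f * Uᵀ).mulVec v i - v i := by
    rw [← myconj_sub f (fun _ => 1), myconj_one hU2, sub_mulVec, one_mulVec]
    rfl
  have h2 : ∑ i, ((U * diagonal f * Uᵀ).mulVec v i - v i) ^ 2
      = ∑ i, ((U * diagonal (fun j => f j - 1) * Uᵀ).mulVec v i) ^ 2 :=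
    Finset.sum_congr rfl fun i _ => by rw [congrFun h1 i]
  rw [h2, sumsq_conj hU1]

private lemma frob_conj (hU1 : Uᵀ * U = 1) (a : Fin n → ℝ) :
    ∑ i, ∑ j, ((U * diagonal a * Uᵀ) i j) ^ 2 = ∑ i, (a i) ^ 2 := by
  set M := U * diagonal a * Uᵀ with hM
  have hMT : Mᵀ = M := by
    rw [hM, transpose_mul, transpose_mul, diagonal_transpose, transpose_transpose]
    noncomm_ring
  have h1 : ∑ i, ∑ j, (M i j) ^ 2 = (Mᵀ * M).trace := by
    simp only [Matrix.trace, Matrix.diag, Matrix.mul_apply, Matrix.transpose_apply, sq]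
    exact Finset.sum_comm
  rw [h1, hMT, hM, myconj_mul hU1, Matrix.trace_mul_cycle, hU1, one_mul, trace_diagonal]
  apply Finset.sum_congr rfl
  intro i _
  rw [sq]

end auxlemmas

set_option maxHeartbeats 2000000 in
/-- In the fixed-design kernel regression setting, the early
stopping (gradient descent) iterates `ᾰ₀ = 0`,
`ᾰ_s = ᾰ_{s-1} - (γ/n)(K_n ᾰ_{s-1} - y)`, with predictions `v̆_t = K_n ᾰ_t`,
satisfy, for `0 < γ < 1/‖K_n‖_op` and `t ≥ 2`,
`E[R(v̆_t)] ≤ c_t E[R(v̄_{1/(γt)})]` with `c_t = 4(1 + 1/(t-1))² ≤ 16`,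
where `v̄_λ = K_n (K_n + λ n I)⁻¹ y` is the KRLS prediction. -/
theorem stmt4 {Ω : Type*} [MeasurableSpace Ω] (P : Measure Ω) [IsProbabilityMeasure P]
    (n : ℕ) (hn : 0 < n)
    (Kn : Matrix (Fin n) (Fin n) ℝ) (hKpsd : Kn.PosSemidef)
    (μ : Fin n → ℝ) (σ : ℝ) (hσ : 0 < σ)
    (ε : Ω → Fin n → ℝ)
    (hmeas : ∀ i, Measurable fun ω => ε ω i)
    (hindep : iIndepFun (fun i ω => ε ω i) P)
    (hident : ∀ i j, IdentDistrib (fun ω => ε ω i) (fun ω => ε ω j) P P)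
    (hL2 : ∀ i, MemLp (fun ω => ε ω i) 2 P)
    (hmean : ∀ i, ∫ ω, ε ω i ∂P = 0)
    (hvar : ∀ i, ∫ ω, (ε ω i) ^ 2 ∂P = σ ^ 2)
    (γ : ℝ) (hγ0 : 0 < γ) (hγ : γ < 1 / opNorm Kn)
    (t : ℕ) (ht : 2 ≤ t)
    (α : ℕ → Ω → Fin n → ℝ) (hα0 : ∀ ω, α 0 ω = 0)
    (hαrec : ∀ s ω, α (s + 1) ω
      = α s ω - (γ / n) • (Kn.mulVec (α s ω) - fun i => μ i + ε ω i)) :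
    expRisk P μ ε (fun ω => Kn.mulVec (α t ω)) - bayesRisk P Kn μ ε
      ≤ (4 * (1 + 1 / ((t : ℝ) - 1)) ^ 2) *
        (expRisk P μ ε
          (fun ω => Kn.mulVec
            ((Kn + ((1 / (γ * t)) * n) • (1 : Matrix (Fin n) (Fin n) ℝ))⁻¹.mulVec
              fun i => μ i + ε ω i))
          - bayesRisk P Kn μ ε)
    ∧ 4 * (1 + 1 / ((t : ℝ) - 1)) ^ 2 ≤ 16 := by
  -- basic numbers
  have hn' : (0:ℝ) < n := by exact_mod_cast hn
  have hn1 : (1:ℝ) ≤ n := by exact_mod_cast hn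
  have ht2 : (2:ℝ) ≤ (t:ℝ) := by exact_mod_cast ht
  have ht0 : (0:ℝ) < (t:ℝ) := by linarith
  -- integrability basics
  have hint1 : ∀ i, Integrable (fun ω => ε ω i) P := fun i => (hL2 i).integrable one_le_two
  have hint2 : ∀ i, Integrable (fun ω => (ε ω i)^2) P := fun i => (hL2 i).integrable_sq
  -- deterministic risk formula
  have hdet : ∀ u : Fin n → ℝ,
      detRisk P μ ε u = (1/(n:ℝ)) * ((∑ i, (u i - μ i)^2) + n * σ^2) := by
    intro u
    have hpt : ∀ i, (fun ω => (u i - (μ i + ε ω i))^2)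
        = fun ω => (u i - μ i)^2 + ((-2*(u i - μ i)) * ε ω i + (ε ω i)^2) := by
      intro i; funext ω; ring
    have hintg : ∀ i, Integrable (fun ω => (u i - (μ i + ε ω i))^2) P := by
      intro i; rw [hpt i]
      exact (integrable_const _).add (((hint1 i).const_mul _).add (hint2 i))
    have hval : ∀ i, ∫ ω, (u i - (μ i + ε ω i))^2 ∂P = (u i - μ i)^2 + σ^2 := by
      intro i
      have I1 : Integrable (fun ω => -2*(u i - μ i) * ε ω i) P := (hint1 i).const_mul _
      have I2 : Integrable (fun ω => -2*(u i - μ i) * ε ω i + (ε ω i)^2) P := I1.add (hint2 i)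
      rw [hpt i, integral_add (integrable_const _) I2,
        integral_add I1 (hint2 i), integral_const_mul, hmean i, hvar i,
        integral_const]
      simp [measure_univ]
    unfold detRisk
    rw [integral_const_mul, integral_finset_sum _ (fun i _ => hintg i),
      Finset.sum_congr rfl (fun i _ => hval i), Finset.sum_add_distrib, Finset.sum_const,
      Finset.card_univ, Fintype.card_fin]
    simp only [nsmul_eq_mul]
  -- covariances
  have hcov : ∀ j k, ∫ ω, ε ω j * ε ω k ∂P = if j = k then σ^2 else 0 := by
    intro j k
    by_cases h : j = k
    · subst h
      rw [if_pos rfl, ← hvar j]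
      congr 1; funext ω; ring
    · rw [if_neg h]
      have hind := ProbabilityTheory.iIndepFun.indepFun hindep (show j ≠ k from h)
      have hmul := hind.integral_mul_eq_mul_integral ((hmeas j).aestronglyMeasurable)
        ((hmeas k).aestronglyMeasurable)
      simp only [Pi.mul_apply] at hmul
      rw [hmul,
        hmean j, hmean k, mul_zero]
  have hcovInt : ∀ j k, Integrable (fun ω => ε ω j * ε ω k) P := by
    intro j k; by_cases h : j = k
    · subst h
      have he : (fun ω => ε ω j * ε ω j) = fun ω => (ε ω j)^2 := by funext ω; ring
      rw [he]; exact hint2 j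
    · exact (ProbabilityTheory.iIndepFun.indepFun hindep h).integrable_mul (hint1 j) (hint1 k)
  -- expected risk of a linear filter
  have hexp : ∀ A : Matrix (Fin n) (Fin n) ℝ,
      expRisk P μ ε (fun ω => A.mulVec (fun i => μ i + ε ω i))
        = (1/(n:ℝ)) * ((∑ i, ((A.mulVec μ) i - μ i)^2)
            + σ^2 * (∑ i, ∑ j, (A i j)^2) + n * σ^2) := by
    intro A
    set b : Fin n → ℝ := fun i => (A.mulVec μ) i - μ i with hb
    have hsplit : ∀ ω i, A.mulVec (fun i => μ i + ε ω i) i - μ i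
        = b i + ∑ j, A i j * ε ω j := by
      intro ω i
      have h0 : (fun i => μ i + ε ω i) = μ + fun i => ε ω i := rfl
      rw [h0, mulVec_add]
      simp only [hb, Pi.add_apply, Matrix.mulVec, dotProduct]
      ring
    have heL2 : ∀ i, MemLp (fun ω => ∑ j, A i j * ε ω j) 2 P := fun i =>
      memLp_finset_sum _ (fun j _ => (hL2 j).const_mul _)
    have heInt : ∀ i, Integrable (fun ω => ∑ j, A i j * ε ω j) P := fun i =>
      (heL2 i).integrable one_le_two
    have heMean : ∀ i, ∫ ω, (∑ j, A i j * ε ω j) ∂P = 0 := by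
      intro i
      rw [integral_finset_sum _ (fun j _ => (hint1 j).const_mul _)]
      simp only [integral_const_mul]
      simp [hmean]
    have heSq : ∀ i, ∫ ω, (∑ j, A i j * ε ω j)^2 ∂P = σ^2 * ∑ j, (A i j)^2 := by
      intro i
      have hpt : (fun ω => (∑ j, A i j * ε ω j)^2)
          = fun ω => ∑ j, ∑ k, (A i j * A i k) * (ε ω j * ε ω k) := by
        funext ω; rw [sq, Finset.sum_mul_sum]
        exact Finset.sum_congr rfl fun j _ => Finset.sum_congr rfl fun k _ => by ring
      rw [hpt, integral_finset_sum _ (fun j _ =>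
        integrable_finset_sum _ (fun k _ => (hcovInt j k).const_mul _))]
      have hj : ∀ j, ∫ ω, (∑ k, (A i j * A i k) * (ε ω j * ε ω k)) ∂P
          = ∑ k, (A i j * A i k) * (if j = k then σ^2 else 0) := by
        intro j
        rw [integral_finset_sum _ (fun k _ => (hcovInt j k).const_mul _)]
        exact Finset.sum_congr rfl fun k _ => by rw [integral_const_mul, hcov j k]
      rw [Finset.sum_congr rfl (fun j _ => hj j)]
      simp only [mul_ite, mul_zero, Finset.sum_ite_eq, Finset.mem_univ, if_true]
      rw [Finset.mul_sum]
      exact Finset.sum_congr rfl fun j _ => by ring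
    have hiInt : ∀ i, Integrable (fun ω => (b i + ∑ j, A i j * ε ω j)^2) P := fun i =>
      ((memLp_const (p := 2) (μ := P) (b i)).add (heL2 i)).integrable_sq
    have hiVal : ∀ i, ∫ ω, (b i + ∑ j, A i j * ε ω j)^2 ∂P
        = (b i)^2 + σ^2 * ∑ j, (A i j)^2 := by
      intro i
      have hpt : (fun ω => (b i + ∑ j, A i j * ε ω j)^2)
          = fun ω => (b i)^2 + ((2 * b i) * (∑ j, A i j * ε ω j) + (∑ j, A i j * ε ω j)^2) := by
        funext ω; ring
      have J1 : Integrable (fun ω => (2 * b i) * (∑ j, A i j * ε ω j)) P := (heInt i).const_mul _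
      have J2 : Integrable (fun ω => (∑ j, A i j * ε ω j)^2) P := (heL2 i).integrable_sq
      have J3 : Integrable
          (fun ω => (2 * b i) * (∑ j, A i j * ε ω j) + (∑ j, A i j * ε ω j)^2) P := J1.add J2
      rw [hpt, integral_add (integrable_const _) J3,
        integral_add J1 J2,
        integral_const_mul, heMean i, heSq i, integral_const]
      simp [measure_univ]
    unfold expRisk
    rw [show (fun ω => detRisk P μ ε (A.mulVec fun i => μ i + ε ω i)) = fun ω =>
        (1/(n:ℝ)) * ((∑ i, (b i + ∑ j, A i j * ε ω j)^2) + n * σ^2) from funext fun ω => by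
          rw [hdet]
          congr 2
          exact Finset.sum_congr rfl fun i _ => by rw [hsplit ω i]]
    rw [integral_const_mul,
      integral_add (integrable_finset_sum _ (fun i _ => hiInt i)) (integrable_const _),
      integral_finset_sum _ (fun i _ => hiInt i), integral_const,
      Finset.sum_congr rfl (fun i _ => hiVal i), Finset.sum_add_distrib]
    simp only [measure_univ, probReal_univ, ENNReal.toReal_one, one_smul, smul_eq_mul]
    rw [← Finset.mul_sum]
    ring
  -- spectral data
  have hH : Kn.IsHermitian := hKpsd.1
  set U : Matrix (Fin n) (Fin n) ℝ :=
    (IsHermitian.eigenvectorUnitary hH : Matrix (Fin n) (Fin n) ℝ) with hUdef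
  set d : Fin n → ℝ := hH.eigenvalues with hddef
  have hstar : star U = Uᵀ := by
    rw [Matrix.star_eq_conjTranspose, Matrix.conjTranspose_eq_transpose_of_trivial]
  have hU2 : U * Uᵀ = 1 := by
    have h := (Matrix.mem_unitaryGroup_iff).mp (IsHermitian.eigenvectorUnitary hH).2
    rw [← hUdef] at h
    rw [hstar] at h
    exact h
  have hU1 : Uᵀ * U = 1 := by
    have h := (Matrix.mem_unitaryGroup_iff').mp (IsHermitian.eigenvectorUnitary hH).2
    rw [← hUdef] at h
    rw [hstar] at h
    exact h
  have hKspec : Kn = U * diagonal d * Uᵀ := by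
    have h := hH.spectral_theorem
    rw [RCLike.ofReal_real_eq_id, Function.id_comp] at h
    rw [Unitary.conjStarAlgAut_apply, ← hUdef, ← hddef, hstar] at h
    exact h
  have hd0 : ∀ i, 0 ≤ d i := fun i => hKpsd.eigenvalues_nonneg i
  -- eigenvalue bound from operator norm
  have hop : ∀ i, d i ≤ opNorm Kn := by
    intro i
    have hv := hH.mulVec_eigenvectorBasis i
    have hvnorm : ‖hH.eigenvectorBasis i‖ = 1 := hH.eigenvectorBasis.orthonormal.1 i
    have hveq : hH.eigenvectorBasis i
        = (WithLp.equiv 2 (Fin n → ℝ)).symm ⇑(hH.eigenvectorBasis i) := rfl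
    have happ : Matrix.toEuclideanCLM (𝕜 := ℝ) Kn (hH.eigenvectorBasis i)
        = d i • hH.eigenvectorBasis i := by
      conv_lhs => rw [hveq]
      rw [WithLp.equiv_symm_apply, Matrix.toEuclideanCLM_toLp, hv, ← hddef,
        WithLp.toLp_smul]
    have hle := ContinuousLinearMap.le_opNorm (Matrix.toEuclideanCLM (𝕜 := ℝ) Kn)
      (hH.eigenvectorBasis i)
    rw [happ, norm_smul, hvnorm, Real.norm_eq_abs, mul_one, mul_one] at hle
    exact le_trans (le_abs_self _) hle
  have hopK : γ * opNorm Kn < 1 := by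
    have hno : 0 ≤ opNorm Kn := norm_nonneg _
    rcases eq_or_lt_of_le hno with h | h
    · exfalso
      rw [← h, div_zero] at hγ
      linarith
    · exact (lt_div_iff₀ h).mp hγ
  have hx0 : ∀ i, 0 ≤ γ/(n:ℝ) * d i := fun i =>
    mul_nonneg (div_nonneg hγ0.le hn'.le) (hd0 i)
  have hx1 : ∀ i, γ/(n:ℝ) * d i ≤ 1 := by
    intro i
    have h1 : γ * d i ≤ γ * opNorm Kn := mul_le_mul_of_nonneg_left (hop i) hγ0.le
    calc γ/(n:ℝ) * d i = (γ * d i)/(n:ℝ) := by ring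
      _ ≤ γ * d i := div_le_self (mul_nonneg hγ0.le (hd0 i)) hn1
      _ ≤ 1 := by linarith
  -- the ridge constant
  set c : ℝ := (1 / (γ * (t:ℝ))) * (n:ℝ) with hcdef
  have hcpos : 0 < c := by rw [hcdef]; positivity
  have hdc : ∀ i, 0 < d i + c := fun i => by linarith [hd0 i, hcpos]
  -- the two filters
  set φf : Fin n → ℝ := fun i => 1 - (1 - γ/(n:ℝ) * d i)^t with hφdef
  set ψf : Fin n → ℝ := fun i => d i * (d i + c)⁻¹ with hψdef
  -- spectral form of the gradient-descent filter
  have hA1spec : (1 : Matrix (Fin n) (Fin n) ℝ)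
      - ((1 : Matrix (Fin n) (Fin n) ℝ) - (γ/(n:ℝ)) • Kn)^t
      = U * diagonal φf * Uᵀ := by
    have e1 : (γ/(n:ℝ)) • Kn = U * diagonal (fun i => γ/(n:ℝ) * d i) * Uᵀ := by
      rw [hKspec]; exact myconj_smul _ _
    have e2 : (1 : Matrix (Fin n) (Fin n) ℝ) - (γ/(n:ℝ)) • Kn
        = U * diagonal (fun i => 1 - γ/(n:ℝ) * d i) * Uᵀ := by
      rw [e1, ← myconj_one hU2, myconj_sub]
    rw [e2, myconj_pow hU1 hU2, ← myconj_one hU2, myconj_sub]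
  -- spectral form of the ridge filter
  have e3 : Kn + c • (1 : Matrix (Fin n) (Fin n) ℝ)
      = U * diagonal (fun i => d i + c) * Uᵀ := by
    rw [hKspec, ← myconj_one hU2, myconj_smul, myconj_add]
    congr 2
    funext i
    simp only [mul_one, add_comm]
  have hA2spec : Kn * (Kn + c • (1 : Matrix (Fin n) (Fin n) ℝ))⁻¹
      = U * diagonal ψf * Uᵀ := by
    rw [e3, myconj_inv hU1 hU2 _ (fun i => (hdc i).ne'), hKspec, myconj_mul hU1]
  -- gradient descent identity
  have hGD : ∀ s ω, Kn.mulVec (α s ω)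
      = ((1 : Matrix (Fin n) (Fin n) ℝ)
          - ((1 : Matrix (Fin n) (Fin n) ℝ) - (γ/(n:ℝ)) • Kn)^s).mulVec
        (fun i => μ i + ε ω i) := by
    intro s
    induction s with
    | zero =>
        intro ω
        simp [hα0 ω, Matrix.mulVec_zero, Matrix.zero_mulVec]
    | succ s ih =>
        intro ω
        set N : Matrix (Fin n) (Fin n) ℝ :=
          (1 : Matrix (Fin n) (Fin n) ℝ) - (γ/(n:ℝ)) • Kn with hNdef
        have hB : (1 : Matrix (Fin n) (Fin n) ℝ) - N = (γ/(n:ℝ)) • Kn := by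
          rw [hNdef, sub_sub_cancel]
        have hMID : ((1 : Matrix (Fin n) (Fin n) ℝ) - N^s)
            - (γ/(n:ℝ)) • (Kn * ((1 : Matrix (Fin n) (Fin n) ℝ) - N^s) - Kn)
            = 1 - N^(s+1) := by
          rw [smul_sub, ← Matrix.smul_mul, ← hB, pow_succ']
          noncomm_ring
        rw [hαrec s ω, mulVec_sub, mulVec_smul, mulVec_sub, ih ω, mulVec_mulVec,
          ← sub_mulVec, ← smul_mulVec, ← sub_mulVec, hMID]
  -- rewrite the two expected risks
  have hfun1 : (fun ω => Kn.mulVec (α t ω))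
      = fun ω => (U * diagonal φf * Uᵀ).mulVec (fun i => μ i + ε ω i) := by
    funext ω
    rw [hGD t ω, hA1spec]
  have hfun2 : (fun ω => Kn.mulVec
        ((Kn + c • (1 : Matrix (Fin n) (Fin n) ℝ))⁻¹.mulVec (fun i => μ i + ε ω i)))
      = fun ω => (U * diagonal ψf * Uᵀ).mulVec (fun i => μ i + ε ω i) := by
    funext ω
    rw [mulVec_mulVec, hA2spec]
  -- Bayes risk upper bound
  have hBB : bayesRisk P Kn μ ε
      ≤ (1/(n:ℝ)) * ((∑ i, (ψf i - 1)^2 * ((Uᵀ.mulVec μ) i)^2) + n * σ^2) := by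
    have hle : bayesRisk P Kn μ ε
        ≤ detRisk P μ ε (Kn.mulVec ((Kn + c • (1 : Matrix (Fin n) (Fin n) ℝ))⁻¹.mulVec μ)) := by
      apply ciInf_le
      refine ⟨0, ?_⟩
      rintro r ⟨a, rfl⟩
      dsimp only
      rw [hdet]
      positivity
    calc bayesRisk P Kn μ ε ≤ _ := hle
      _ = _ := by
          rw [mulVec_mulVec, hA2spec, hdet, bias_conj hU1 hU2]
  -- termwise comparison
  have hterm : ∀ i, (φf i - 1)^2 * ((Uᵀ.mulVec μ) i)^2
      - (ψf i - 1)^2 * ((Uᵀ.mulVec μ) i)^2 + σ^2 * (φf i)^2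
      ≤ 4 * σ^2 * (ψf i)^2 := by
    intro i
    have hDpos : (0:ℝ) < 1 + (t:ℝ) * (γ/(n:ℝ) * d i) := by
      have h0 := hx0 i
      nlinarith
    have hψ : ψf i = ((t:ℝ) * (γ/(n:ℝ) * d i)) / (1 + (t:ℝ) * (γ/(n:ℝ) * d i)) := by
      have h1 : d i + c ≠ 0 := (hdc i).ne'
      simp only [hψdef]
      rw [hcdef] at h1 ⊢
      field_simp
      ring
    have e1 : (φf i - 1)^2 = ((1 - γ/(n:ℝ) * d i)^t)^2 := by simp only [hφdef]; ring
    have e2 : (ψf i - 1)^2 = (1 / (1 + (t:ℝ) * (γ/(n:ℝ) * d i)))^2 := by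
      rw [hψ, div_sub_one hDpos.ne']
      rw [show (t:ℝ) * (γ/(n:ℝ) * d i) - (1 + (t:ℝ) * (γ/(n:ℝ) * d i)) = -1 by ring]
      rw [div_pow, div_pow]
      norm_num
    have e3 : (φf i)^2 = (1 - (1 - γ/(n:ℝ) * d i)^t)^2 := by simp only [hφdef]
    rw [e1, e2, e3, hψ]
    exact scalar_key _ _ _ t (hx0 i) (hx1 i) (sq_nonneg σ) (sq_nonneg _)
  have hsum : (∑ i, (φf i - 1)^2 * ((Uᵀ.mulVec μ) i)^2)
      - (∑ i, (ψf i - 1)^2 * ((Uᵀ.mulVec μ) i)^2)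
      + σ^2 * (∑ i, (φf i)^2)
      ≤ 4 * (σ^2 * ∑ i, (ψf i)^2) := by
    rw [Finset.mul_sum, ← Finset.sum_sub_distrib, ← Finset.sum_add_distrib]
    calc _ ≤ ∑ i : Fin n, 4 * σ^2 * (ψf i)^2 := Finset.sum_le_sum fun i _ => hterm i
      _ = _ := by rw [← Finset.mul_sum]; ring
  -- constants
  have htm : (0:ℝ) < (t:ℝ) - 1 := by linarith
  have hr0 : (0:ℝ) < 1/((t:ℝ)-1) := by positivity
  have hr1 : 1/((t:ℝ)-1) ≤ 1 := by rw [div_le_one htm]; linarith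
  have hC4 : (4:ℝ) ≤ 4 * (1 + 1/((t:ℝ) - 1))^2 := by nlinarith [hr0, sq_nonneg (1/((t:ℝ)-1))]
  have hC16 : 4 * (1 + 1/((t:ℝ) - 1))^2 ≤ 16 := by nlinarith [hr0, hr1]
  refine ⟨?_, hC16⟩
  rw [hfun1, hfun2, hexp, hexp, bias_conj hU1 hU2, frob_conj hU1, bias_conj hU1 hU2,
    frob_conj hU1]
  have hV2 : 0 ≤ σ^2 * ∑ i, (ψf i)^2 := by positivity
  have F1 : (1/(n:ℝ)) * ((∑ i, (φf i - 1)^2 * ((Uᵀ.mulVec μ) i)^2)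
      - (∑ i, (ψf i - 1)^2 * ((Uᵀ.mulVec μ) i)^2) + σ^2 * (∑ i, (φf i)^2))
      ≤ (1/(n:ℝ)) * (4 * (σ^2 * ∑ i, (ψf i)^2)) :=
    mul_le_mul_of_nonneg_left hsum (by positivity)
  have F2 : 0 ≤ ((4 * (1 + 1/((t:ℝ) - 1))^2) - 4) * ((1/(n:ℝ)) * (σ^2 * ∑ i, (ψf i)^2)) :=
    mul_nonneg (by linarith) (mul_nonneg (by positivity) hV2)
  have F3 : 0 ≤ ((4 * (1 + 1/((t:ℝ) - 1))^2) - 1) *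
      ((1/(n:ℝ)) * ((∑ i, (ψf i - 1)^2 * ((Uᵀ.mulVec μ) i)^2) + n * σ^2)
        - bayesRisk P Kn μ ε) :=
    mul_nonneg (by linarith) (by linarith [hBB])
  linarith [F1, F2, F3]
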